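/- Let m ≥ 3, let K ⊂ ℝ^m be a compact set of Lebesgue measure zero, and let ω be a continuity modulus satisfying the integral conditions. Let f : K → ℝ be continuous and suppose there exist constants c₁, c₂ > 0 such that for every sufficiently small δ > 0 there exists a function v_δ, differentiable on K_δ, with |f(X) − v_δ(X)| ≤ c₁ ω(δ) for all X ∈ K and |∇v_δ(X)| ≤ c₂ ω(δ)/δ for all X ∈ K_δ. Then f ∈ C^ω(K), i.e. there is a constant C with |f(X₁) − f(X₂)| ≤ C ω(|X₁ − X₂|) for all X₁, X₂ ∈ K. -/
import Mathlib


open MeasureTheory Metric Set Filter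

noncomputable section

/-- A continuity modulus: a positive, nondecreasing, concave function on `(0,∞)`
tending to `0` at `0⁺`, with `t ↦ ω t / t` nonincreasing. -/
def IsContinuityModulus (ω : ℝ → ℝ) : Prop :=
  (∀ t : ℝ, 0 < t → 0 < ω t) ∧
  (∀ s t : ℝ, 0 < s → s ≤ t → ω s ≤ ω t) ∧
  ConcaveOn ℝ (Set.Ioi (0:ℝ)) ω ∧
  Filter.Tendsto ω (nhdsWithin 0 (Set.Ioi (0:ℝ))) (nhds 0) ∧
  (∀ s t : ℝ, 0 < s → s ≤ t → ω t / t ≤ ω s / s)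

/-- Condition A of the paper: for each `δ > 0` there is a finite `δ`-separated subset
`Z δ` of `K` whose `c₀ δ`-closed balls cover the `δ`-neighborhood of `K`, with the number
of points of `Z δ` in any ball of radius `R ≥ δ` bounded by `c₁ (R/δ)^{m-2}`. -/
def ConditionA (m : ℕ) (K : Set (EuclideanSpace ℝ (Fin m))) (c₀ c₁ : ℝ)
    (Z : ℝ → Finset (EuclideanSpace ℝ (Fin m))) : Prop :=
  0 < c₀ ∧ 0 < c₁ ∧
  ∀ δ : ℝ, 0 < δ →
    ((Z δ : Set (EuclideanSpace ℝ (Fin m))) ⊆ K) ∧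
    (∀ x ∈ Z δ, ∀ y ∈ Z δ, x ≠ y → δ ≤ dist x y) ∧
    (Metric.thickening δ K ⊆ ⋃ z ∈ Z δ, Metric.closedBall z (c₀ * δ)) ∧
    (∀ R : ℝ, δ ≤ R → ∀ X : EuclideanSpace ℝ (Fin m),
      (((Z δ : Set (EuclideanSpace ℝ (Fin m))) ∩ Metric.closedBall X R).ncard : ℝ)
        ≤ c₁ * (R / δ) ^ (m - 2))

/-- Theorem 3.1 of the paper, sufficiency: if a continuous `f` on a compact
set `K` of Lebesgue measure zero admits, for all small `δ > 0`, approximants `v_δ`,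
differentiable on the `δ`-neighborhood `K_δ`, with `|f - v_δ| ≤ c₁ ω(δ)` on `K` and
`|∇ v_δ| ≤ c₂ ω(δ)/δ` on `K_δ`, then `f ∈ C^ω(K)`. -/
theorem sufficiency_of_approximation {m : ℕ} (hm : 3 ≤ m)
    (K : Set (EuclideanSpace ℝ (Fin m))) (hK : IsCompact K) (hKvol : volume K = 0)
    (ω : ℝ → ℝ) (hω : IsContinuityModulus ω)
    (C' C'' : ℝ) (hC' : 0 < C') (hC'' : 0 < C'')
    (hint1 : ∀ t : ℝ, 0 < t →
      (∫⁻ τ in Set.Ioo (0:ℝ) t, ENNReal.ofReal (ω τ / τ)) ≤ ENNReal.ofReal (C' * ω t))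
    (hint2 : ∀ t : ℝ, 0 < t →
      (∫⁻ τ in Set.Ioi t, ENNReal.ofReal (ω τ / τ ^ 2)) ≤ ENNReal.ofReal (C'' * ω t / t))
    (f : EuclideanSpace ℝ (Fin m) → ℝ) (hf : ContinuousOn f K)
    (c₁ c₂ : ℝ) (hc₁ : 0 < c₁) (hc₂ : 0 < c₂)
    (δ₀ : ℝ) (hδ₀ : 0 < δ₀)
    (happ : ∀ δ : ℝ, 0 < δ → δ < δ₀ →
      ∃ v : EuclideanSpace ℝ (Fin m) → ℝ,
        (∀ X ∈ Metric.thickening δ K, DifferentiableAt ℝ v X) ∧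
        (∀ X ∈ K, |f X - v X| ≤ c₁ * ω δ) ∧
        (∀ X ∈ Metric.thickening δ K, ‖fderiv ℝ v X‖ ≤ c₂ * ω δ / δ)) :
    ∃ C : ℝ, 0 < C ∧ ∀ X₁ ∈ K, ∀ X₂ ∈ K, X₁ ≠ X₂ →
      |f X₁ - f X₂| ≤ C * ω (dist X₁ X₂) := by
  obtain ⟨hωpos, hωmono, -, -, -⟩ := hω
  obtain ⟨M, hM⟩ := hK.exists_bound_of_continuousOn hf
  set M' := max M 0 with hM'def
  have hM'0 : 0 ≤ M' := le_max_right _ _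
  have hMM' : M ≤ M' := le_max_left _ _
  have hωδ₀ : 0 < ω δ₀ := hωpos δ₀ hδ₀
  refine ⟨(2*c₁ + c₂) + (2*M' + 1)/(ω δ₀), by positivity, ?_⟩
  intro X₁ hX₁ X₂ hX₂ hne
  set d := dist X₁ X₂ with hd
  have hd0 : 0 < d := dist_pos.2 hne
  have hωd : 0 < ω d := hωpos d hd0
  by_cases hcase : d < δ₀
  · obtain ⟨v, hv1, hv2, hv3⟩ := happ d hd0 hcase
    have hseg : segment ℝ X₁ X₂ ⊆ Metric.thickening d K := by
      intro P hP
      rw [Metric.mem_thickening_iff]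
      have hsum : dist X₁ P + dist P X₂ = d := dist_add_dist_of_mem_segment hP
      by_cases h1 : dist P X₁ < d
      · exact ⟨X₁, hX₁, h1⟩
      · refine ⟨X₂, hX₂, ?_⟩
        push_neg at h1
        have := dist_comm X₁ P
        linarith
    have hmvt : ‖v X₁ - v X₂‖ ≤ (c₂ * ω d / d) * ‖X₁ - X₂‖ :=
      Convex.norm_image_sub_le_of_norm_fderiv_le
        (fun x hx => hv1 x (hseg hx)) (fun x hx => hv3 x (hseg hx))
        (convex_segment _ _) (right_mem_segment _ _ _) (left_mem_segment _ _ _)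
    have hnorm : ‖X₁ - X₂‖ = d := by rw [hd, dist_eq_norm]
    rw [hnorm] at hmvt
    have hv12 : |v X₁ - v X₂| ≤ c₂ * ω d := by
      have : c₂ * ω d / d * d = c₂ * ω d := by field_simp
      calc |v X₁ - v X₂| = ‖v X₁ - v X₂‖ := rfl
        _ ≤ c₂ * ω d / d * d := hmvt
        _ = c₂ * ω d := this
    have h1 := hv2 X₁ hX₁
    have h2 := hv2 X₂ hX₂
    have hextra : 0 ≤ (2*M' + 1)/(ω δ₀) * ω d := by positivity
    have : |f X₁ - f X₂| ≤ |f X₁ - v X₁| + |v X₁ - v X₂| + |v X₂ - f X₂| := by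
      have := abs_sub_abs_le_abs_sub (f X₁ - f X₂) 0
      calc |f X₁ - f X₂| = |(f X₁ - v X₁) + (v X₁ - v X₂) + (v X₂ - f X₂)| := by ring_nf
        _ ≤ |(f X₁ - v X₁) + (v X₁ - v X₂)| + |v X₂ - f X₂| := abs_add_le _ _
        _ ≤ |f X₁ - v X₁| + |v X₁ - v X₂| + |v X₂ - f X₂| := by
            gcongr; exact abs_add_le _ _
    rw [abs_sub_comm (v X₂)] at this
    nlinarith
  · push_neg at hcase
    have hωle : ω δ₀ ≤ ω d := hωmono δ₀ d hδ₀ hcase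
    have h1 : |f X₁| ≤ M' := le_trans (hM X₁ hX₁) hMM'
    have h2 : |f X₂| ≤ M' := le_trans (hM X₂ hX₂) hMM'
    have key : 2*M' + 1 ≤ (2*M' + 1)/(ω δ₀) * ω d := by
      rw [div_mul_eq_mul_div, le_div_iff₀ hωδ₀]
      nlinarith
    have habs : |f X₁ - f X₂| ≤ 2*M' := by
      calc |f X₁ - f X₂| ≤ |f X₁| + |f X₂| := abs_sub _ _
        _ ≤ 2*M' := by linarith
    nlinarith
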